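/- For any permutation T of the vertex set {0,1,...,n} of the complete graph K_{n+1}, the sum over all nonempty T-invariant subsets y of the index i_T(y) = (-1)^{|y|-1} · sign(T restricted to y) equals 1, where sign denotes the signature of the permutation T|y. -/

import Mathlib

open scoped Classical

/-- The index `i_T(y) = (-1)^{|y|-1} sign(T|y)` of a permutation `T` at an invariant
subset `y` (and `0` at non-invariant subsets). -/
noncomputable def permIndex {α : Type*} [Fintype α] [DecidableEq α]
    (T : Equiv.Perm α) (y : Finset α) : ℤ :=
  if h : ∀ x, x ∈ y ↔ T x ∈ y then
    (-1) ^ (y.card - 1) * (Equiv.Perm.sign (T.subtypePerm (fun x => (h x).symm) : Equiv.Perm {x // x ∈ y}) : ℤ)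
  else 0

namespace PermIndexAux

open Equiv Equiv.Perm Finset

variable {α : Type*} [Fintype α] [DecidableEq α]

/-- The auxiliary sum term `(-1)^{|y|} sign(T|y)` (without the `-1` in the exponent). -/
noncomputable def FF (T : Perm α) (y : Finset α) : ℤ :=
  if h : ∀ x, x ∈ y ↔ T x ∈ y then
    (-1) ^ y.card * (Equiv.Perm.sign (T.subtypePerm (fun x => (h x).symm) : Equiv.Perm {x // x ∈ y}) : ℤ)
  else 0

lemma ofSub_apply (T : Perm α) (y : Finset α) (h : ∀ x, x ∈ y ↔ T x ∈ y) (x : α) :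
    Equiv.Perm.ofSubtype (T.subtypePerm (fun x => (h x).symm)) x = if x ∈ y then T x else x := by
  by_cases hx : x ∈ y
  · rw [if_pos hx, Equiv.Perm.ofSubtype_apply_of_mem _ hx]; rfl
  · rw [if_neg hx, Equiv.Perm.ofSubtype_apply_of_not_mem _ hx]

lemma sign_eq (T : Perm α) (y : Finset α) (h : ∀ x, x ∈ y ↔ T x ∈ y) :
    (Equiv.Perm.sign (T.subtypePerm (fun x => (h x).symm) : Equiv.Perm {x // x ∈ y})) =
      Equiv.Perm.sign (Equiv.Perm.ofSubtype (T.subtypePerm (fun x => (h x).symm))) := by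
  rw [Equiv.Perm.sign_ofSubtype]

lemma FF_union (T : Perm α) (a b : Finset α)
    (ha : ∀ x, x ∈ a ↔ T x ∈ a) (hb : ∀ x, x ∈ b ↔ T x ∈ b) (hd : Disjoint a b) :
    FF T (a ∪ b) = FF T a * FF T b := by
  have hab : ∀ x, x ∈ a ∪ b ↔ T x ∈ a ∪ b := by
    intro x; simp only [Finset.mem_union, ha x, hb x]
  have key : Equiv.Perm.ofSubtype (T.subtypePerm (fun x => (hab x).symm)) =
      Equiv.Perm.ofSubtype (T.subtypePerm (fun x => (ha x).symm)) * Equiv.Perm.ofSubtype (T.subtypePerm (fun x => (hb x).symm)) := by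
    ext x
    rw [Equiv.Perm.mul_apply, ofSub_apply T _ hab, ofSub_apply T _ ha, ofSub_apply T _ hb]
    by_cases hxa : x ∈ a
    · have hxb : x ∉ b := fun hxb => (Finset.disjoint_left.1 hd hxa) hxb
      rw [if_neg hxb, if_pos hxa, if_pos (Finset.mem_union.2 (Or.inl hxa))]
    · by_cases hxb : x ∈ b
      · have hTb : T x ∈ b := (hb x).1 hxb
        have hTa : T x ∉ a := fun hTa => (Finset.disjoint_left.1 hd hTa) hTb
        rw [if_pos hxb, if_neg hTa, if_pos (Finset.mem_union.2 (Or.inr hxb))]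
      · rw [if_neg hxb, if_neg hxa, if_neg (fun hx => (Finset.mem_union.1 hx).elim hxa hxb)]
  rw [FF, FF, FF, dif_pos hab, dif_pos ha, dif_pos hb]
  rw [sign_eq T _ hab, sign_eq T _ ha, sign_eq T _ hb, key, map_mul,
    Finset.card_union_of_disjoint hd, pow_add]
  push_cast
  ring

/-- The orbit of `x0` under `T`, as a `Finset`. -/
noncomputable def orb (T : Perm α) (x0 : α) : Finset α :=
  Finset.univ.filter (T.SameCycle x0)

lemma mem_orb (T : Perm α) (x0 x : α) : x ∈ orb T x0 ↔ T.SameCycle x0 x := by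
  simp [orb]

lemma x0_mem_orb (T : Perm α) (x0 : α) : x0 ∈ orb T x0 :=
  (mem_orb T x0 x0).2 (Equiv.Perm.SameCycle.refl _ _)

lemma orb_inv (T : Perm α) (x0 : α) : ∀ x, x ∈ orb T x0 ↔ T x ∈ orb T x0 := by
  intro x
  rw [mem_orb, mem_orb, Equiv.Perm.sameCycle_apply_right]

lemma ofSub_orb (T : Perm α) (x0 : α) :
    Equiv.Perm.ofSubtype (T.subtypePerm (fun x => (orb_inv T x0 x).symm)) = T.cycleOf x0 := by
  ext x
  rw [ofSub_apply T _ (orb_inv T x0), Equiv.Perm.cycleOf_apply]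
  simp only [mem_orb]

lemma FF_orb (T : Perm α) (x0 : α) : FF T (orb T x0) = -1 := by
  rw [FF, dif_pos (orb_inv T x0), sign_eq T _ (orb_inv T x0), ofSub_orb]
  by_cases h0 : T x0 = x0
  · have horb : orb T x0 = {x0} := by
      ext x
      simp only [mem_orb, Finset.mem_singleton]
      constructor
      · rintro ⟨k, hk⟩
        rw [Equiv.Perm.zpow_apply_eq_self_of_apply_eq_self h0 k] at hk
        exact hk.symm
      · rintro rfl; exact Equiv.Perm.SameCycle.refl _ _
    have hcy : T.cycleOf x0 = 1 := (Equiv.Perm.cycleOf_eq_one_iff T).2 h0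
    rw [hcy, horb]
    simp
  · have hcy := Equiv.Perm.isCycle_cycleOf T h0
    rw [hcy.sign]
    have hsupp : (T.cycleOf x0).support = orb T x0 := by
      ext y
      rw [Equiv.Perm.mem_support_cycleOf_iff, mem_orb]
      simp only [Equiv.Perm.mem_support]
      tauto
    rw [hsupp]
    have hcard : (orb T x0).card = ((orb T x0).card - 1) + 1 :=
      (Nat.succ_pred_eq_of_pos (Finset.card_pos.2 ⟨x0, x0_mem_orb T x0⟩)).symm
    rw [hcard]
    push_cast
    ring_nf
    rw [pow_mul', neg_one_sq, one_pow]

lemma inv_zpow_mem (T : Perm α) (y : Finset α) (h : ∀ x, x ∈ y ↔ T x ∈ y)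
    (x : α) (hx : x ∈ y) (k : ℤ) : (T ^ k) x ∈ y := by
  induction k using Int.induction_on with
  | zero => simpa using hx
  | succ k ih =>
      have e : T ^ ((k : ℤ) + 1) = T * T ^ (k : ℤ) := by
        rw [add_comm, zpow_add, zpow_one]
      rw [e, Equiv.Perm.mul_apply]
      exact (h _).1 ih
  | pred k ih =>
      have e : T ^ (-(k : ℤ) - 1) = T⁻¹ * T ^ (-(k : ℤ)) := by
        rw [sub_eq_add_neg, add_comm, zpow_add, zpow_neg_one]
      rw [e, Equiv.Perm.mul_apply]
      exact (h (T⁻¹ ((T ^ (-(k : ℤ))) x))).2 (by simpa using ih)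

lemma orb_subset_of_not_disjoint (T : Perm α) (x0 : α) (y : Finset α)
    (h : ∀ x, x ∈ y ↔ T x ∈ y) (hnd : ¬ Disjoint (orb T x0) y) : orb T x0 ⊆ y := by
  rw [Finset.not_disjoint_iff] at hnd
  obtain ⟨x, hxo, hxy⟩ := hnd
  obtain ⟨k, hk⟩ := (mem_orb T x0 x).1 hxo
  have hx0 : x0 ∈ y := by
    have := inv_zpow_mem T y h x hxy (-k)
    rw [← hk] at this
    simpa [← zpow_add] using this
  intro z hz
  obtain ⟨m, hm⟩ := (mem_orb T x0 z).1 hz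
  rw [← hm]
  exact inv_zpow_mem T y h x0 hx0 m

lemma FF_empty (T : Perm α) : FF T (∅ : Finset α) = 1 := by
  have h : ∀ x, x ∈ (∅ : Finset α) ↔ T x ∈ (∅ : Finset α) := by simp
  rw [FF, dif_pos h]
  have : T.subtypePerm (fun x => (h x).symm) = 1 := by
    ext x
    exact (Finset.notMem_empty x.1 x.2).elim
  rw [this]
  simp

lemma permIndex_eq_neg_FF (T : Perm α) (y : Finset α) (hne : y.Nonempty)
    (h : ∀ x, x ∈ y ↔ T x ∈ y) : permIndex T y = -FF T y := by
  rw [permIndex, FF, dif_pos h, dif_pos h]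
  have hcard : y.card = (y.card - 1) + 1 :=
    (Nat.succ_pred_eq_of_pos (Finset.card_pos.2 hne)).symm
  rw [hcard]
  have : y.card - 1 + 1 - 1 = y.card - 1 := by omega
  rw [this, pow_add]
  ring

end PermIndexAux

/-- For any permutation `T` of the vertex set of the complete graph `K_{n+1}`, the sum of
the indices `i_T(y) = (-1)^{|y|-1} sign(T|y)` over all nonempty `T`-invariant subsets `y`
equals `1`. -/
theorem sum_permIndex_complete_graph (n : ℕ) (T : Equiv.Perm (Fin (n + 1))) :
    ∑ y ∈ Finset.univ.filter (fun y : Finset (Fin (n + 1)) =>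
        y.Nonempty ∧ ∀ x, x ∈ y ↔ T x ∈ y), permIndex T y = 1 := by
  classical
  open PermIndexAux Finset in
  set c0 : Finset (Fin (n + 1)) := orb T 0 with hc0def
  have hc0inv := orb_inv T (0 : Fin (n + 1))
  have h0c0 : (0 : Fin (n + 1)) ∈ c0 := x0_mem_orb T 0
  set S : Finset (Finset (Fin (n + 1))) :=
    Finset.univ.filter (fun y => ∀ x, x ∈ y ↔ T x ∈ y) with hSdef
  -- invariance facts
  have inv_sdiff : ∀ y : Finset (Fin (n + 1)), (∀ x, x ∈ y ↔ T x ∈ y) →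
      ∀ x, x ∈ y \ c0 ↔ T x ∈ y \ c0 := by
    intro y hy x
    simp only [Finset.mem_sdiff, hy x, hc0def, hc0inv x]
  have inv_union : ∀ y : Finset (Fin (n + 1)), (∀ x, x ∈ y ↔ T x ∈ y) →
      ∀ x, x ∈ y ∪ c0 ↔ T x ∈ y ∪ c0 := by
    intro y hy x
    simp only [Finset.mem_union, hy x, hc0def, hc0inv x]
  -- main involution argument
  have hsum : ∑ y ∈ S, FF T y = 0 := by
    apply Finset.sum_involution
      (g := fun y (_ : y ∈ S) => if c0 ⊆ y then y \ c0 else y ∪ c0)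
    · -- cancellation
      intro y hy
      have hyinv : ∀ x, x ∈ y ↔ T x ∈ y := (Finset.mem_filter.1 hy).2
      by_cases hc : c0 ⊆ y
      · rw [if_pos hc]
        have hdec : y = (y \ c0) ∪ c0 := (Finset.sdiff_union_of_subset hc).symm
        have : FF T y = FF T (y \ c0) * FF T c0 := by
          conv_lhs => rw [hdec]
          exact FF_union T _ _ (inv_sdiff y hyinv) hc0inv Finset.sdiff_disjoint
        rw [this, FF_orb]
        ring
      · rw [if_neg hc]
        have hd : Disjoint c0 y := by
          by_contra hnd
          exact hc (orb_subset_of_not_disjoint T 0 y hyinv hnd)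
        have : FF T (y ∪ c0) = FF T y * FF T c0 :=
          FF_union T _ _ hyinv hc0inv hd.symm
        rw [this, FF_orb]
        ring
    · -- g y ≠ y
      intro y hy _
      have hyinv : ∀ x, x ∈ y ↔ T x ∈ y := (Finset.mem_filter.1 hy).2
      by_cases hc : c0 ⊆ y
      · rw [if_pos hc]
        intro heq
        have : (0 : Fin (n + 1)) ∈ y \ c0 := heq.symm ▸ hc h0c0
        exact (Finset.mem_sdiff.1 this).2 h0c0
      · rw [if_neg hc]
        intro heq
        have hd : Disjoint c0 y := by
          by_contra hnd
          exact hc (orb_subset_of_not_disjoint T 0 y hyinv hnd)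
        have : (0 : Fin (n + 1)) ∈ y := heq ▸ Finset.mem_union.2 (Or.inr h0c0)
        exact (Finset.disjoint_left.1 hd h0c0) this
    · -- g maps into S
      intro y hy
      have hyinv : ∀ x, x ∈ y ↔ T x ∈ y := (Finset.mem_filter.1 hy).2
      by_cases hc : c0 ⊆ y
      · rw [if_pos hc]
        exact Finset.mem_filter.2 ⟨Finset.mem_univ _, inv_sdiff y hyinv⟩
      · rw [if_neg hc]
        exact Finset.mem_filter.2 ⟨Finset.mem_univ _, inv_union y hyinv⟩
    · -- involutive
      intro y hy
      have hyinv : ∀ x, x ∈ y ↔ T x ∈ y := (Finset.mem_filter.1 hy).2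
      by_cases hc : c0 ⊆ y
      · rw [if_pos hc]
        have hns : ¬ c0 ⊆ y \ c0 := fun hsub =>
          (Finset.mem_sdiff.1 (hsub h0c0)).2 h0c0
        rw [if_neg hns]
        exact Finset.sdiff_union_of_subset hc
      · rw [if_neg hc]
        have hd : Disjoint c0 y := by
          by_contra hnd
          exact hc (orb_subset_of_not_disjoint T 0 y hyinv hnd)
        have hsub : c0 ⊆ y ∪ c0 := Finset.subset_union_right
        rw [if_pos hsub]
        exact Finset.union_sdiff_cancel_right hd.symm
  -- relate S to the goal's index set
  set S' : Finset (Finset (Fin (n + 1))) :=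
    Finset.univ.filter (fun y : Finset (Fin (n + 1)) =>
      y.Nonempty ∧ ∀ x, x ∈ y ↔ T x ∈ y) with hS'def
  have hSS' : S = insert ∅ S' := by
    ext y
    simp only [hSdef, hS'def, Finset.mem_insert, Finset.mem_filter, Finset.mem_univ,
      true_and, Finset.nonempty_iff_ne_empty]
    constructor
    · intro hy
      by_cases hne : y = ∅
      · exact Or.inl hne
      · exact Or.inr ⟨hne, hy⟩
    · rintro (rfl | ⟨_, hy⟩)
      · simp
      · exact hy
  have hnotmem : (∅ : Finset (Fin (n + 1))) ∉ S' := by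
    simp [hS'def]
  rw [hSS', Finset.sum_insert hnotmem, FF_empty] at hsum
  have hS'sum : ∑ y ∈ S', FF T y = -1 := by linarith
  have : ∑ y ∈ S', permIndex T y = ∑ y ∈ S', -FF T y := by
    apply Finset.sum_congr rfl
    intro y hy
    have hy' := Finset.mem_filter.1 hy
    exact permIndex_eq_neg_FF T y hy'.2.1 hy'.2.2
  rw [this, Finset.sum_neg_distrib, hS'sum]
  norm_num
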